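/- arXiv:1509.00247 — 4 statements merged into one kernel-verified Lean document; each statement's English description precedes it below -/
import Mathlib

section
/- Let a group $G$ be generated by two commuting subgroups $H$ and $K$ (every element of $H$ commutes with every element of $K$), with $G$ acting on a probability space $(X,\mu)$ by measure-preserving transformations. Let $\mathcal{E}$ be an equivalence relation on $X$ contained in the orbit equivalence relation of $G$, and for $g \in G$ set $A_g := \{x \in X : gx \,\mathcal{E}\, x\}$ (assumed measurable). Then for every $k \in K$ and every $s \in H$ one has $s^{-1} A_k \,\triangle\, A_k \subseteq X \setminus (A_s \cap k^{-1} A_s)$, and consequently $\mu(s^{-1} A_k \,\triangle\, A_k) \le 1 - \mu(A_s \cap k^{-1} A_s)$. -/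
open MeasureTheory Pointwise symmDiff

/-- For commuting generating subgroups `H`, `K` and `A g = {x | g • x ∼ x}`, one has
`s⁻¹ • A k ∆ A k ⊆ (A s ∩ k⁻¹ • A s)ᶜ` and the corresponding measure estimate. -/
theorem stmt1 {G X : Type*} [Group G] [MulAction G X] [MeasurableSpace X]
    (μ : Measure X) [IsProbabilityMeasure μ]
    (hmp : ∀ (g : G) (B : Set X), μ (g • B) = μ B)
    (H K : Subgroup G) (hgen : H ⊔ K = ⊤)
    (hcomm : ∀ h ∈ H, ∀ k ∈ K, h * k = k * h)
    (E : X → X → Prop) (hE : Equivalence E)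
    (hEsub : ∀ x y : X, E x y → ∃ g : G, g • x = y)
    (A : G → Set X) (hA : ∀ g : G, A g = {x | E (g • x) x})
    (hAmeas : ∀ g, MeasurableSet (A g)) :
    ∀ k ∈ K, ∀ s ∈ H,
      (s⁻¹ • A k) ∆ (A k) ⊆ (A s ∩ k⁻¹ • A s)ᶜ ∧
      μ ((s⁻¹ • A k) ∆ (A k)) ≤ 1 - μ (A s ∩ k⁻¹ • A s) := by
  intro k hk s hs
  have hsk : ∀ x : X, s • k • x = k • s • x := by
    intro x; rw [smul_smul, smul_smul, hcomm s hs k hk]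
  -- the set inclusion
  have hincl : (s⁻¹ • A k) ∆ (A k) ⊆ (A s ∩ k⁻¹ • A s)ᶜ := by
    intro x hx
    rw [Set.mem_symmDiff] at hx
    intro hxS
    obtain ⟨hxAs, hxkAs⟩ := hxS
    rw [Set.mem_inv_smul_set_iff] at hxkAs
    rw [hA] at hxAs hxkAs
    -- hxAs : E (s • x) x, hxkAs : E (s • k • x) (k • x)
    have hiff : E (k • x) x ↔ E (k • s • x) (s • x) := by
      constructor
      · intro h
        rw [← hsk]
        exact hE.trans hxkAs (hE.trans h (hE.symm hxAs))
      · intro h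
        rw [← hsk] at h
        exact hE.trans (hE.trans (hE.symm hxkAs) h) hxAs
    rcases hx with ⟨h1, h2⟩ | ⟨h1, h2⟩
    · rw [Set.mem_inv_smul_set_iff, hA] at h1
      exact h2 (by rw [hA]; exact hiff.mpr h1)
    · rw [hA] at h1
      exact h2 (by rw [Set.mem_inv_smul_set_iff, hA]; exact hiff.mp h1)
  refine ⟨hincl, ?_⟩
  set As := A s with hAs
  set b := μ (As ∩ k⁻¹ • As) with hb
  set d := μ (As \ k⁻¹ • As) with hd
  set a := μ As with ha
  -- b + d = a
  have key : b + d = a := by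
    have h1 : μ (k • As ∩ As) + μ (k • As \ As) = μ (k • As) :=
      measure_inter_add_diff _ (hAmeas s)
    have e1 : μ (k • As) = a := hmp k As
    have e2 : μ (k • As ∩ As) = b := by
      have := hmp k⁻¹ (k • As ∩ As)
      rw [Set.smul_set_inter, inv_smul_smul] at this
      exact this.symm
    have e3 : μ (k • As \ As) = d := by
      have := hmp k (As \ k⁻¹ • As)
      rwa [Set.smul_set_sdiff, smul_inv_smul] at this
    rw [e1, e2, e3] at h1
    exact h1
  have ha1 : a ≤ 1 := prob_le_one
  have hcompl : (As ∩ k⁻¹ • As)ᶜ ⊆ Asᶜ ∪ (As \ k⁻¹ • As) := by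
    intro x hx
    by_cases hxa : x ∈ As
    · right; exact ⟨hxa, fun hxk => hx ⟨hxa, hxk⟩⟩
    · left; exact hxa
  have hμcompl : μ ((As ∩ k⁻¹ • As)ᶜ) ≤ (1 - a) + d := by
    calc μ ((As ∩ k⁻¹ • As)ᶜ) ≤ μ (Asᶜ ∪ (As \ k⁻¹ • As)) := measure_mono hcompl
      _ ≤ μ (Asᶜ) + d := measure_union_le _ _
      _ = (1 - a) + d := by
          rw [measure_compl (hAmeas s) (measure_ne_top μ _), measure_univ]
  have hfinal : μ ((s⁻¹ • A k) ∆ (A k)) + b ≤ 1 := by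
    calc μ ((s⁻¹ • A k) ∆ (A k)) + b ≤ ((1 - a) + d) + b :=
          add_le_add_left ((measure_mono hincl).trans hμcompl) b
      _ = (1 - a) + a := by rw [add_assoc, add_comm d b, key]
      _ = 1 := tsub_add_cancel_of_le ha1
  exact ENNReal.le_sub_of_add_le_right (measure_ne_top μ _) hfinal
end

section
/- Every finite equivalence relation is non-approximable: if $\mathcal{R}$ is an equivalence relation on a probability space $(X,\mu)$ all of whose classes are finite of uniformly bounded size $\le N$, and $\mathcal{R} = \bigcup_n \nearrow \mathcal{R}_n$ is an increasing union of equivalence relations, then there exists $n$ and a measurable set $A$ with $\mu(A) > 0$ such that $\mathcal{R}_n \cap (A \times A) = \mathcal{R} \cap (A \times A)$. (One may take a countable Borel equivalence relation setting and in fact find $n$ with $\mathcal{R}_n = \mathcal{R}$ on a set of measure $> 1 - \epsilon$ for any $\epsilon > 0$.) -/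
open MeasureTheory

/-- An equivalence relation with classes of size at most `N` is non-approximable:
any increasing approximation of it is trivial. -/
theorem stmt14 {X : Type*} [MeasurableSpace X] (μ : Measure X) [IsProbabilityMeasure μ]
    (R : X → X → Prop) (hR : Equivalence R) (N : ℕ)
    (hfin : ∀ x : X, {y | R x y}.Finite ∧ {y | R x y}.ncard ≤ N)
    (r : ℕ → X → X → Prop) (hr : ∀ n, Equivalence (r n))
    (hmono : ∀ n (x y : X), r n x y → r (n + 1) x y)
    (hsub : ∀ n (x y : X), r n x y → R x y)
    (hunion : ∀ x y : X, R x y ↔ ∃ n, r n x y)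
    (hmeas : ∀ n, MeasurableSet {x : X | ∀ y : X, R x y → r n x y}) :
    ∃ n, ∃ A : Set X, MeasurableSet A ∧ 0 < μ A ∧
      ∀ x ∈ A, ∀ y ∈ A, (r n x y ↔ R x y) := by
  classical
  have mono : ∀ m n, m ≤ n → ∀ x y, r m x y → r n x y := by
    intro m n hmn
    induction hmn with
    | refl => exact fun x y h => h
    | step h ih => exact fun x y hxy => hmono _ x y (ih x y hxy)
  set A : ℕ → Set X := fun n => {x : X | ∀ y : X, R x y → r n x y} with hA
  have hcover : ∀ x : X, ∃ n, x ∈ A n := by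
    intro x
    have hf := (hfin x).1
    set g : X → ℕ := fun y => if h : R x y then Nat.find ((hunion x y).1 h) else 0 with hg
    refine ⟨hf.toFinset.sup g, fun y hy => ?_⟩
    have hyg : Nat.find ((hunion x y).1 hy) = g y := by simp [hg, hy]
    have h1 : r (g y) x y := by
      rw [← hyg]; exact Nat.find_spec ((hunion x y).1 hy)
    refine mono (g y) _ ?_ x y h1
    exact Finset.le_sup (hf.mem_toFinset.2 hy)
  have huniv : (⋃ n, A n) = Set.univ := by
    ext x; simp only [Set.mem_iUnion, Set.mem_univ, iff_true]
    exact hcover x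
  have hpos : ∃ n, 0 < μ (A n) := by
    by_contra h
    push_neg at h
    have hzero : ∀ n, μ (A n) = 0 := fun n => le_antisymm (h n) zero_le
    have : μ (⋃ n, A n) = 0 := measure_iUnion_null hzero
    rw [huniv] at this
    simp [measure_univ] at this
  obtain ⟨n, hn⟩ := hpos
  refine ⟨n, A n, hmeas n, hn, fun x hx y hy => ?_⟩
  exact ⟨fun h => hsub n x y h, fun h => hx y h⟩
end

section
/- (Strong ergodicity dichotomy step) Let $H$ act on a probability space $(X,\mu)$ by measure-preserving transformations, strongly ergodically with respect to a generating set $S$ in the quantitative sense: for every $\epsilon_0 > 0$ there is $\delta_0 > 0$ such that any measurable $A$ with $\sup_{s \in S} \mu(s^{-1}A \triangle A) < \delta_0$ satisfies $\mu(A) < \epsilon_0$ or $\mu(A) > 1 - \epsilon_0$. Let $K$ be a group commuting with $H$ inside a common group acting on $X$, let $\mathcal{E}$ be an equivalence relation contained in the orbit relation, $A_g = \{x : gx \,\mathcal{E}\, x\}$, and suppose $\mu(A_s) > 1 - \delta$ for all $s \in S$ with $2\delta < \delta_0$. Then for every $k \in K$: either $\mu(A_k) < \epsilon_0$ or $\mu(A_k)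 > 1 - \epsilon_0$. -/
open MeasureTheory Pointwise symmDiff

/-- Strong ergodicity dichotomy step: if `H` acts quantitatively strongly ergodically
with respect to a generating set `S`, `K` commutes with `H`, and `μ (A s) > 1 - δ` for
all `s ∈ S` with `2δ < δ₀`, then for each `k ∈ K` either `μ (A k) < ε₀` or
`μ (A k) > 1 - ε₀`. -/
theorem stmt16 {G X : Type*} [Group G] [MulAction G X] [MeasurableSpace X]
    (μ : Measure X) [IsProbabilityMeasure μ]
    (hmp : ∀ (g : G) (B : Set X), μ (g • B) = μ B)
    (H K : Subgroup G) (hcomm : ∀ h ∈ H, ∀ k ∈ K, h * k = k * h)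
    (S : Set G) (hSH : Subgroup.closure S = H)
    (ε₀ δ₀ δ : ℝ) (hε₀ : 0 < ε₀) (hδ₀ : 0 < δ₀) (hδ : 2 * δ < δ₀)
    (hse : ∀ A : Set X, MeasurableSet A →
      (∀ s ∈ S, (μ ((s⁻¹ • A) ∆ A)).toReal < δ₀) →
      (μ A).toReal < ε₀ ∨ (μ A).toReal > 1 - ε₀)
    (E : X → X → Prop) (hE : Equivalence E)
    (hEsub : ∀ x y : X, E x y → ∃ g : G, g • x = y)
    (A : G → Set X) (hA : ∀ g : G, A g = {x | E (g • x) x})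
    (hAmeas : ∀ g, MeasurableSet (A g))
    (hδS : ∀ s ∈ S, (μ (A s)).toReal > 1 - δ) :
    ∀ k ∈ K, (μ (A k)).toReal < ε₀ ∨ (μ (A k)).toReal > 1 - ε₀ := by
  intro k hk
  apply hse (A k) (hAmeas k)
  intro s hs
  have hsH : s ∈ H := hSH ▸ Subgroup.subset_closure hs
  have hc : s * k = k * s := hcomm s hsH k hk
  -- the key set inclusion
  have hsub : (s⁻¹ • A k) ∆ A k ⊆ (A s)ᶜ ∪ k⁻¹ • (A s)ᶜ := by
    intro x hx
    by_contra hxc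
    simp only [Set.mem_union, Set.mem_compl_iff, not_or, not_not,
      Set.smul_set_compl, Set.mem_inv_smul_set_iff] at hxc
    obtain ⟨hx1, hx2⟩ := hxc
    rw [hA] at hx1 hx2
    have hx1' : E (s • x) x := hx1
    have hx2' : E (s • k • x) (k • x) := hx2
    have hiff : x ∈ s⁻¹ • A k ↔ x ∈ A k := by
      rw [Set.mem_inv_smul_set_iff, hA]
      simp only [Set.mem_setOf_eq]
      have hkey : k • s • x = s • k • x := by
        rw [← mul_smul, ← mul_smul, ← hc]
      rw [hkey]
      constructor
      · intro h
        exact hE.trans (hE.trans (hE.symm hx2') h) hx1'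
      · intro h
        exact hE.trans hx2' (hE.trans h (hE.symm hx1'))
    rw [Set.mem_symmDiff] at hx
    rcases hx with ⟨h1, h2⟩ | ⟨h1, h2⟩
    · exact h2 (hiff.mp h1)
    · exact h2 (hiff.mpr h1)
  have hbound : μ ((s⁻¹ • A k) ∆ A k) ≤ μ ((A s)ᶜ) + μ ((A s)ᶜ) := by
    calc μ ((s⁻¹ • A k) ∆ A k) ≤ μ ((A s)ᶜ ∪ k⁻¹ • (A s)ᶜ) := measure_mono hsub
    _ ≤ μ ((A s)ᶜ) + μ (k⁻¹ • (A s)ᶜ) := measure_union_le _ _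
    _ = μ ((A s)ᶜ) + μ ((A s)ᶜ) := by rw [hmp]
  have hcompl : (μ ((A s)ᶜ)).toReal = 1 - (μ (A s)).toReal := by
    rw [prob_compl_eq_one_sub (hAmeas s),
      ENNReal.toReal_sub_of_le prob_le_one ENNReal.one_ne_top, ENNReal.toReal_one]
  have hfin : μ ((A s)ᶜ) + μ ((A s)ᶜ) ≠ ⊤ := by
    exact ENNReal.add_ne_top.mpr ⟨measure_ne_top μ _, measure_ne_top μ _⟩
  have h1 : (μ ((s⁻¹ • A k) ∆ A k)).toReal ≤ (μ ((A s)ᶜ) + μ ((A s)ᶜ)).toReal :=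
    ENNReal.toReal_mono hfin hbound
  rw [ENNReal.toReal_add (measure_ne_top μ _) (measure_ne_top μ _), hcompl] at h1
  have := hδS s hs
  linarith
end

section
/- In the Baumslag–Solitar group $B(p,q) = \langle a, t \mid t a^p t^{-1} = a^q \rangle$, the kernel $N$ of the modular homomorphism $B(p,q) \to \mathbb{Q}^*$ sending $t \mapsto p/q$ and $a \mapsto 1$ has the property that every element $w \in N$ commutes with some nontrivial power $a^{k_w}$ ($k_w \ne 0$) of $a$. -/
/-- In the Baumslag–Solitar group `B(p,q) = ⟨a, t ∣ t a^p t⁻¹ = a^q⟩`, every element of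
the kernel of the modular map (`a ↦ 1`, `t ↦ p/q`) commutes with some nontrivial power
of `a`. -/
theorem stmt18 (p q : ℤ) (hp : p ≠ 0) (hq : q ≠ 0)
    (rels : Set (FreeGroup (Fin 2)))
    (hrels : rels = {FreeGroup.of 1 * FreeGroup.of 0 ^ p * (FreeGroup.of 1)⁻¹ *
      (FreeGroup.of 0 ^ q)⁻¹})
    (φ : PresentedGroup rels →* ℚˣ)
    (hφa : φ (PresentedGroup.of 0) = 1)
    (hφt : ((φ (PresentedGroup.of 1) : ℚˣ) : ℚ) = (p : ℚ) / q)
    (w : PresentedGroup rels) (hw : w ∈ φ.ker) :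
    ∃ k : ℤ, k ≠ 0 ∧ Commute w ((PresentedGroup.of (rels := rels) 0) ^ k) := by
  set A : PresentedGroup rels := PresentedGroup.of 0 with hA
  set T : PresentedGroup rels := PresentedGroup.of 1 with hT
  -- the defining relation
  have hrel : T * A ^ p * T⁻¹ = A ^ q := by
    have hmem : (FreeGroup.of 1 * FreeGroup.of 0 ^ p * (FreeGroup.of 1)⁻¹ *
        (FreeGroup.of 0 ^ q)⁻¹ : FreeGroup (Fin 2)) ∈ Subgroup.normalClosure rels := by
      apply Subgroup.subset_normalClosure
      rw [hrels]; rfl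
    have h1 : PresentedGroup.mk rels (FreeGroup.of 1 * FreeGroup.of 0 ^ p *
        (FreeGroup.of 1)⁻¹ * (FreeGroup.of 0 ^ q)⁻¹) = 1 := by
      exact (QuotientGroup.eq_one_iff _).2 hmem
    have h2 : T * A ^ p * T⁻¹ * (A ^ q)⁻¹ = 1 := by
      simpa [hA, hT, PresentedGroup.of, map_mul, map_inv, map_zpow] using h1
    exact mul_inv_eq_one.mp h2
  -- generalized: conjugating any zpow multiple
  have hrelN : ∀ s : ℤ, T * A ^ (p * s) * T⁻¹ = A ^ (q * s) := by
    intro s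
    have := congrArg (fun x => x ^ s) hrel
    simpa [← zpow_mul, mul_comm, conj_zpow] using this
  -- main claim by induction
  have main : ∀ v : PresentedGroup rels, ∃ k m : ℤ, k ≠ 0 ∧
      (m : ℚ) = (k : ℚ) * (((φ v)⁻¹ : ℚˣ) : ℚ) ∧ v * A ^ k * v⁻¹ = A ^ m := by
    intro v
    let S : Subgroup (PresentedGroup rels) :=
      { carrier := {v | ∃ k m : ℤ, k ≠ 0 ∧
          (m : ℚ) = (k : ℚ) * (((φ v)⁻¹ : ℚˣ) : ℚ) ∧ v * A ^ k * v⁻¹ = A ^ m}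
        one_mem' := ⟨1, 1, one_ne_zero, by simp, by simp⟩
        mul_mem' := by
          rintro x y ⟨k₁, m₁, hk₁, hm₁, hc₁⟩ ⟨k₂, m₂, hk₂, hm₂, hc₂⟩
          have hcx : ∀ s : ℤ, x * A ^ (k₁ * s) * x⁻¹ = A ^ (m₁ * s) := by
            intro s
            have := congrArg (fun z => z ^ s) hc₁
            simpa [← zpow_mul, conj_zpow] using this
          have hcy : ∀ s : ℤ, y * A ^ (k₂ * s) * y⁻¹ = A ^ (m₂ * s) := by
            intro s
            have := congrArg (fun z => z ^ s) hc₂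
            simpa [← zpow_mul, conj_zpow] using this
          refine ⟨k₁ * k₂, m₁ * m₂, mul_ne_zero hk₁ hk₂, ?_, ?_⟩
          · push_cast [hm₁, hm₂]
            simp [map_mul, mul_inv]
            push_cast
            ring
          · have h1 : y * A ^ (k₂ * k₁) * y⁻¹ = A ^ (m₂ * k₁) := hcy k₁
            have h2 : x * A ^ (k₁ * m₂) * x⁻¹ = A ^ (m₁ * m₂) := hcx m₂
            calc x * y * A ^ (k₁ * k₂) * (x * y)⁻¹
                = x * (y * A ^ (k₂ * k₁) * y⁻¹) * x⁻¹ := by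
                  rw [mul_comm k₁ k₂]; group
              _ = x * A ^ (k₁ * m₂) * x⁻¹ := by rw [h1, mul_comm m₂ k₁]
              _ = A ^ (m₁ * m₂) := h2
        inv_mem' := by
          rintro x ⟨k, m, hk, hm, hc⟩
          have hmne : (m : ℚ) ≠ 0 := by
            rw [hm]
            exact mul_ne_zero (Int.cast_ne_zero.2 hk) (Units.ne_zero _)
          refine ⟨m, k, by exact_mod_cast hmne, ?_, ?_⟩
          · rw [map_inv, inv_inv]
            field_simp [hm]
            rw [hm, mul_assoc, Units.inv_mul, mul_one]
          · have := congrArg (fun z => x⁻¹ * z * x) hc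
            simpa [mul_assoc] using this.symm }
    have hAmem : A ∈ S := ⟨1, 1, one_ne_zero, by simp [hφa, hA]; exact hφa, by simp⟩
    have hTmem : T ∈ S := by
      refine ⟨p, q, hp, ?_, hrel⟩
      have hφt' : (((φ T)⁻¹ : ℚˣ) : ℚ) = (q : ℚ) / p := by
        rw [Units.val_inv_eq_inv_val, hφt, inv_div]
      rw [hφt']
      field_simp
    have : ∀ j : Fin 2, PresentedGroup.of j ∈ S := by
      intro j
      fin_cases j
      · exact hAmem
      · exact hTmem
    exact PresentedGroup.generated_by rels S this v
  obtain ⟨k, m, hk, hm, hc⟩ := main w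
  have hφw : φ w = 1 := hw
  have : (m : ℚ) = (k : ℚ) := by rw [hm, hφw]; simp
  have hmk : m = k := by exact_mod_cast this
  refine ⟨k, hk, ?_⟩
  rw [Commute, SemiconjBy]
  have := hc
  rw [hmk] at this
  calc w * A ^ k = (w * A ^ k * w⁻¹) * w := by group
    _ = A ^ k * w := by rw [this]
end
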